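/- Let X ⊆ [2, m+1] be a fixed finite set. Then for all k, k' ≥ max(X) − 1, the number of permutations in S_{k+1} with descent top set exactly X equals the number of permutations in S_{k'+1} with descent top set exactly X. That is, |R(k, X)| is independent of k once k ≥ max(X) − 1. -/

import Mathlib

open Finset

/-- Positions of descents of a permutation of `Fin (n+1)` in one-line notation. -/
def descSet (n : ℕ) (σ : Equiv.Perm (Fin (n+1))) : Finset (Fin n) :=
  Finset.univ.filter (fun i : Fin n => σ i.succ < σ i.castSucc)

/-- Number of descents. -/
def des (n : ℕ) (σ : Equiv.Perm (Fin (n+1))) : ℕ := (descSet n σ).card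

/-- Descent top set, with values written 1-based (so `DT n σ ⊆ [2, n+1]`). -/
def DT (n : ℕ) (σ : Equiv.Perm (Fin (n+1))) : Finset ℕ :=
  (descSet n σ).image (fun i => (σ i.castSucc : ℕ) + 1)

/-- `β!̂ = (k+1)^{β₁} k^{β₂} ⋯ 2^{β_k}` for a tuple `β` of length `k`. -/
def hatFac (β : List ℕ) : ℕ :=
  (((List.range β.length).zip β).map (fun p => (β.length + 1 - p.1) ^ p.2)).prod

/-- `α(X)!̂` where, for `X = {x₁ < … < x_k}`, `α(X) = (x₁ - 1, x₂ - x₁, …, x_k - x_{k-1})`. -/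
def alphaHat (X : Finset ℕ) : ℕ :=
  hatFac (List.zipWith (fun a b => b - a) (1 :: X.sort (· ≤ ·)) (X.sort (· ≤ ·)))

def extPerm (n : ℕ) (σ : Equiv.Perm (Fin (n+1))) : Equiv.Perm (Fin (n+2)) where
  toFun i := Fin.lastCases (Fin.last (n+1)) (fun j => (σ j).castSucc) i
  invFun i := Fin.lastCases (Fin.last (n+1)) (fun j => (σ.symm j).castSucc) i
  left_inv i := by
    induction i using Fin.lastCases with
    | last => simp
    | cast j => simp
  right_inv i := by
    induction i using Fin.lastCases with
    | last => simp
    | cast j => simp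

@[simp] lemma extPerm_last (n : ℕ) (σ : Equiv.Perm (Fin (n+1))) :
    extPerm n σ (Fin.last (n+1)) = Fin.last (n+1) := by
  simp [extPerm]

@[simp] lemma extPerm_castSucc (n : ℕ) (σ : Equiv.Perm (Fin (n+1))) (j : Fin (n+1)) :
    extPerm n σ j.castSucc = (σ j).castSucc := by
  simp [extPerm]

lemma descSet_ext (n : ℕ) (σ : Equiv.Perm (Fin (n+1))) :
    descSet (n+1) (extPerm n σ) = (descSet n σ).image Fin.castSucc := by
  ext i
  induction i using Fin.lastCases with
  | last =>
    simp only [descSet, mem_filter, mem_univ, true_and, mem_image]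
    constructor
    · intro h
      exfalso
      rw [Fin.succ_last] at h
      simp at h
      exact absurd h (Fin.castSucc_lt_last _).not_gt
    · rintro ⟨j, _, hj⟩
      exact absurd hj (Fin.castSucc_lt_last j).ne
  | cast j =>
    simp only [descSet, mem_filter, mem_univ, true_and, mem_image]
    rw [Fin.succ_castSucc]
    simp only [extPerm_castSucc, Fin.castSucc_lt_castSucc_iff]
    constructor
    · intro h; exact ⟨j, h, rfl⟩
    · rintro ⟨j', h, hj⟩
      rwa [Fin.castSucc_injective _ hj] at h

lemma DT_ext (n : ℕ) (σ : Equiv.Perm (Fin (n+1))) :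
    DT (n+1) (extPerm n σ) = DT n σ := by
  rw [DT, descSet_ext, Finset.image_image]
  apply Finset.image_congr
  intro j _
  simp [Fin.succ_castSucc]

theorem test : True := trivial

lemma fix_last (X : Finset ℕ) (n : ℕ) (hn : X.sup id ≤ n + 1)
    (τ : Equiv.Perm (Fin (n+2))) (hτ : DT (n+1) τ = X) :
    τ (Fin.last (n+1)) = Fin.last (n+1) := by
  by_contra h
  have h1 : τ.symm (Fin.last (n+1)) ≠ Fin.last (n+1) := by
    intro he
    have := congrArg τ he
    rw [Equiv.apply_symm_apply] at this
    exact h this.symm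
  obtain ⟨j, hj⟩ := Fin.exists_castSucc_eq.mpr h1
  have hτj : τ j.castSucc = Fin.last (n+1) := by
    rw [hj, Equiv.apply_symm_apply]
  have hdesc : j ∈ descSet (n+1) τ := by
    simp only [descSet, mem_filter, mem_univ, true_and, hτj]
    apply Fin.lt_last_iff_ne_last.mpr
    intro he
    have := τ.injective (he.trans hτj.symm)
    exact (Fin.castSucc_lt_succ (i := j)).ne' this
  have hmem : (n + 2 : ℕ) ∈ X := by
    rw [← hτ, DT]
    apply Finset.mem_image.mpr
    exact ⟨j, hdesc, by rw [hτj]; simp⟩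
  have h2 : n + 2 ≤ X.sup id := Finset.le_sup (f := id) hmem
  omega

def resPerm (n : ℕ) (τ : Equiv.Perm (Fin (n+2)))
    (h : τ (Fin.last (n+1)) = Fin.last (n+1)) : Equiv.Perm (Fin (n+1)) where
  toFun j := (τ j.castSucc).castPred (by
    intro he
    exact (Fin.castSucc_lt_last j).ne (τ.injective (he.trans h.symm)))
  invFun j := (τ.symm j.castSucc).castPred (by
    intro he
    have : τ (Fin.last (n+1)) = j.castSucc := by rw [← he, Equiv.apply_symm_apply]
    exact (Fin.castSucc_lt_last j).ne' (h.symm.trans this))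
  left_inv j := by
    apply Fin.castSucc_injective
    simp [Fin.castSucc_castPred]
  right_inv j := by
    apply Fin.castSucc_injective
    simp [Fin.castSucc_castPred]

lemma ext_res (n : ℕ) (τ : Equiv.Perm (Fin (n+2)))
    (h : τ (Fin.last (n+1)) = Fin.last (n+1)) :
    extPerm n (resPerm n τ h) = τ := by
  apply Equiv.ext
  intro i
  induction i using Fin.lastCases with
  | last => rw [h]; simp
  | cast j => simp [resPerm, extPerm, Fin.castSucc_castPred]

lemma step (X : Finset ℕ) (n : ℕ) (hn : X.sup id ≤ n + 1) :
    (Finset.univ.filter (fun σ : Equiv.Perm (Fin (n+1)) => DT n σ = X)).card =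
      (Finset.univ.filter (fun σ : Equiv.Perm (Fin (n+2)) => DT (n+1) σ = X)).card := by
  apply Finset.card_bij (fun σ _ => extPerm n σ)
  · intro σ hσ
    simp only [mem_filter, mem_univ, true_and] at hσ ⊢
    rw [DT_ext, hσ]
  · intro σ hσ σ' hσ' he
    apply Equiv.ext
    intro j
    have := congrFun (congrArg (fun (e : Equiv.Perm (Fin (n+2))) => (e : Fin (n+2) → Fin (n+2))) he) j.castSucc
    simp only [extPerm_castSucc] at this
    exact Fin.castSucc_injective _ this
  · intro τ hτ
    simp only [mem_filter, mem_univ, true_and] at hτ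
    have h := fix_last X n hn τ hτ
    refine ⟨resPerm n τ h, ?_, ext_res n τ h⟩
    simp only [mem_filter, mem_univ, true_and]
    rw [← ext_res n τ h, DT_ext] at hτ
    exact hτ

lemma stepAdd (X : Finset ℕ) (k j : ℕ) (hk : X.sup id ≤ k + 1) :
    (Finset.univ.filter (fun σ : Equiv.Perm (Fin (k+1)) => DT k σ = X)).card =
      (Finset.univ.filter (fun σ : Equiv.Perm (Fin (k+j+1)) => DT (k+j) σ = X)).card := by
  induction j with
  | zero => rfl
  | succ j ih => rw [ih]; exact step X (k+j) (by omega)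


/-- The number of permutations in `S_{k+1}` with descent top set exactly `X` does not
depend on `k` once `k ≥ max X - 1`. -/
theorem card_DT_eq_stable (X : Finset ℕ) (hX : ∀ x ∈ X, 2 ≤ x) (k k' : ℕ)
    (hk : X.sup id ≤ k + 1) (hk' : X.sup id ≤ k' + 1) :
    (Finset.univ.filter (fun σ : Equiv.Perm (Fin (k+1)) => DT k σ = X)).card =
      (Finset.univ.filter (fun σ : Equiv.Perm (Fin (k'+1)) => DT k' σ = X)).card     := by
  rcases le_total k k' with h | h
  · obtain ⟨j, rfl⟩ := Nat.exists_eq_add_of_le h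
    exact stepAdd X k j hk
  · obtain ⟨j, rfl⟩ := Nat.exists_eq_add_of_le h
    exact (stepAdd X k' j hk').symm
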